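/- Let G = (V,E) be a connected threshold graph with n = |V| ≥ 4 vertices. Then G admits a 2-community structure if and only if G is not isomorphic to the star S_{n−1} (the complete bipartite graph K_{1,n−1}). -/

import Mathlib

set_option maxHeartbeats 1000000

/-- The set of neighbours of `v` lying in `C`. -/
def nbrsIn {V : Type*} [DecidableEq V] (G : SimpleGraph V) [DecidableRel G.Adj]
    (C : Finset V) (v : V) : Finset V :=
  C.filter (fun w => G.Adj v w)

/-- A 2-community structure of `G`: a partition `{C₁, C₂}` of the vertex set into two
sets, each of size at least 2, satisfying the proportionality condition. -/
def Is2Comm {V : Type*} [Fintype V] [DecidableEq V] (G : SimpleGraph V) [DecidableRel G.Adj]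
    (C₁ C₂ : Finset V) : Prop :=
  2 ≤ C₁.card ∧ 2 ≤ C₂.card ∧ Disjoint C₁ C₂ ∧ C₁ ∪ C₂ = Finset.univ ∧
  (∀ v ∈ C₁, (nbrsIn G C₂ v).card * (C₁.card - 1) ≤ (nbrsIn G C₁ v).card * C₂.card) ∧
  (∀ v ∈ C₂, (nbrsIn G C₁ v).card * (C₂.card - 1) ≤ (nbrsIn G C₂ v).card * C₁.card)

/-- `G` is a threshold graph: its vertex set can be partitioned into a clique `Q` and an
independent set `S` whose (open) neighbourhoods are linearly ordered by inclusion. -/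
def IsThresholdGraph {V : Type*} [Fintype V] [DecidableEq V] (G : SimpleGraph V)
    [DecidableRel G.Adj] : Prop :=
  ∃ Q S : Finset V, Disjoint Q S ∧ Q ∪ S = Finset.univ ∧
    G.IsClique (↑Q : Set V) ∧
    (∀ w ∈ S, ∀ w' ∈ S, ¬ G.Adj w w') ∧
    (∀ w ∈ S, ∀ w' ∈ S,
      G.neighborFinset w ⊆ G.neighborFinset w' ∨ G.neighborFinset w' ⊆ G.neighborFinset w)

private lemma mem_take_one {α : Type*} {L : List α} {a b : α}
    (ha : a ∈ L.take 1) (hb : b ∈ L.take 1) : a = b := by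
  cases L with
  | nil => simp at ha
  | cons x t => simp at ha hb; rw [ha, hb]


section helpers
variable {V : Type*} [Fintype V] [DecidableEq V] (G : SimpleGraph V) [DecidableRel G.Adj]

variable {V : Type*} [Fintype V] [DecidableEq V] (G : SimpleGraph V) [DecidableRel G.Adj]

lemma no2comm_aux (c : V)
    (h1 : ∀ v, v ≠ c → G.Adj c v)
    (h2 : ∀ v w : V, v ≠ c → w ≠ c → ¬ G.Adj v w)
    (C₁ C₂ : Finset V) (hC₂ : 2 ≤ C₂.card) (hd : Disjoint C₁ C₂) (hc : c ∈ C₁)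
    (k : ∀ v ∈ C₂, (nbrsIn G C₁ v).card * (C₂.card - 1) ≤ (nbrsIn G C₂ v).card * C₁.card) :
    False := by
  obtain ⟨v, hv⟩ : C₂.Nonempty := Finset.card_pos.mp (by omega)
  have hvc : v ≠ c := fun h => (Finset.disjoint_left.mp hd hc) (h ▸ hv)
  have hempty : nbrsIn G C₂ v = ∅ := by
    apply Finset.filter_eq_empty_iff.mpr
    intro w hw
    exact h2 v w hvc (fun h => (Finset.disjoint_left.mp hd hc) (h ▸ hw))
  have hone : c ∈ nbrsIn G C₁ v :=
    Finset.mem_filter.mpr ⟨hc, (h1 v hvc).symm⟩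
  have h1le : 1 ≤ (nbrsIn G C₁ v).card := Finset.card_pos.mpr ⟨c, hone⟩
  have := k v hv
  rw [hempty] at this
  simp only [Finset.card_empty, zero_mul, Nat.le_zero, Nat.mul_eq_zero] at this
  omega

lemma no2comm_of_star (c : V)
    (h1 : ∀ v, v ≠ c → G.Adj c v)
    (h2 : ∀ v w : V, v ≠ c → w ≠ c → ¬ G.Adj v w)
    (C₁ C₂ : Finset V) : ¬ Is2Comm G C₁ C₂ := by
  rintro ⟨hc₁, hc₂, hd, hu, k₁, k₂⟩
  have hcmem : c ∈ C₁ ∪ C₂ := hu ▸ Finset.mem_univ c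
  rcases Finset.mem_union.mp hcmem with hc | hc
  · exact no2comm_aux G c h1 h2 C₁ C₂ hc₂ hd hc k₂
  · exact no2comm_aux G c h1 h2 C₂ C₁ hc₁ hd.symm hc k₁

lemma star_iso (c : V)
    (h1 : ∀ v, v ≠ c → G.Adj c v)
    (h2 : ∀ v w : V, v ≠ c → w ≠ c → ¬ G.Adj v w) :
    Nonempty (G ≃g completeBipartiteGraph (Fin 1) (Fin (Fintype.card V - 1))) := by
  have hcard : Fintype.card {v : V // ¬ v = c} = Fintype.card V - 1 := by
    rw [Fintype.card_subtype_compl, Fintype.card_subtype_eq]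
  let e₁ : {v : V // v = c} ≃ Fin 1 := Fintype.equivFinOfCardEq (Fintype.card_subtype_eq c)
  let e₂ : {v : V // ¬ v = c} ≃ Fin (Fintype.card V - 1) := Fintype.equivFinOfCardEq hcard
  let f : V ≃ (Fin 1 ⊕ Fin (Fintype.card V - 1)) :=
    (Equiv.sumCompl (· = c)).symm.trans (Equiv.sumCongr e₁ e₂)
  have hf_pos : ∀ (a : V) (h : a = c), f a = Sum.inl (e₁ ⟨a, h⟩) := by
    intro a h
    simp only [f, Equiv.trans_apply, Equiv.sumCongr_apply]
    rw [Equiv.sumCompl_symm_apply_of_pos (p := (· = c)) h, Sum.map_inl]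
  have hf_neg : ∀ (a : V) (h : ¬ a = c), f a = Sum.inr (e₂ ⟨a, h⟩) := by
    intro a h
    simp only [f, Equiv.trans_apply, Equiv.sumCongr_apply]
    rw [Equiv.sumCompl_symm_apply_of_neg (p := (· = c)) h, Sum.map_inr]
  refine ⟨⟨f, ?_⟩⟩
  intro a b
  show (completeBipartiteGraph _ _).Adj (f a) (f b) ↔ G.Adj a b
  by_cases ha : a = c <;> by_cases hb : b = c
  · rw [hf_pos a ha, hf_pos b hb]
    subst ha; subst hb
    simp [completeBipartiteGraph]
  · rw [hf_pos a ha, hf_neg b hb]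
    subst ha
    simp [completeBipartiteGraph, h1 b hb]
  · rw [hf_neg a ha, hf_pos b hb]
    subst hb
    simp [completeBipartiteGraph, (h1 a ha).symm]
  · rw [hf_neg a ha, hf_neg b hb]
    simp [completeBipartiteGraph, h2 a b ha hb]


variable {V : Type*} [Fintype V] [DecidableEq V] (G : SimpleGraph V) [DecidableRel G.Adj]

lemma construction (Q S : Finset V) (hQS : Disjoint Q S) (hunion : Q ∪ S = Finset.univ)
    (hclique : G.IsClique (↑Q : Set V))
    (hindep : ∀ w ∈ S, ∀ w' ∈ S, ¬ G.Adj w w')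
    (hnest : ∀ w ∈ S, ∀ w' ∈ S,
      G.neighborFinset w ⊆ G.neighborFinset w' ∨ G.neighborFinset w' ⊆ G.neighborFinset w)
    (hdeg : ∀ w ∈ S, ∃ x, G.Adj w x)
    (hS : S.Nonempty) (hq : 2 ≤ Q.card)
    (hcase : 3 ≤ Q.card ∨ (2 ≤ S.card ∧ ∃ w ∈ S, 2 ≤ G.degree w)) :
    ∃ C₁ C₂ : Finset V, Is2Comm G C₁ C₂ := by
  set q := Q.card with hqdef
  set s := S.card with hsdef
  -- neighbours of S-vertices lie in Q
  have hNQ : ∀ w ∈ S, G.neighborFinset w ⊆ Q := by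
    intro w hw x hx
    rw [SimpleGraph.mem_neighborFinset] at hx
    rcases Finset.mem_union.mp (hunion ▸ Finset.mem_univ x) with h | h
    · exact h
    · exact absurd hx (hindep w hw x h)
  have hdle : ∀ w ∈ S, G.degree w ≤ q := by
    intro w hw
    rw [← SimpleGraph.card_neighborFinset_eq_degree]
    exact Finset.card_le_card (hNQ w hw)
  -- monotonicity of neighbourhoods in the degree
  have hmono : ∀ w ∈ S, ∀ w' ∈ S, G.degree w ≤ G.degree w' →
      G.neighborFinset w ⊆ G.neighborFinset w' := by
    intro w hw w' hw' hd
    rcases hnest w hw w' hw' with h | h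
    · exact h
    · have hd' : (G.neighborFinset w).card ≤ (G.neighborFinset w').card := by
        rwa [SimpleGraph.card_neighborFinset_eq_degree, SimpleGraph.card_neighborFinset_eq_degree]
      rw [Finset.eq_of_subset_of_card_le h hd']
  -- the dominating vertex c
  obtain ⟨w₀, hw₀S, hw₀min⟩ := Finset.exists_min_image S (fun w => G.degree w) hS
  obtain ⟨x₀, hx₀⟩ := hdeg w₀ hw₀S
  have hcmem : ∀ w ∈ S, x₀ ∈ G.neighborFinset w := fun w hw =>
    hmono w₀ hw₀S w hw (hw₀min w hw) ((SimpleGraph.mem_neighborFinset G w₀ x₀).mpr hx₀)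
  set c := x₀ with hcdef
  have hcQ : c ∈ Q := hNQ w₀ hw₀S (hcmem w₀ hw₀S)
  have hcadj : ∀ w ∈ S, G.Adj c w := fun w hw =>
    ((SimpleGraph.mem_neighborFinset G w c).mp (hcmem w hw)).symm
  -- a sorted enumeration of S
  set le : V → V → Bool := fun a b => decide (G.degree a ≤ G.degree b) with hledef
  set l : List V := S.toList.mergeSort le with hldef
  have hperm : l.Perm S.toList := List.mergeSort_perm S.toList le
  have hnodupl : l.Nodup := hperm.nodup_iff.mpr S.nodup_toList
  have hlS : l.toFinset = S := by
    rw [List.toFinset_eq_of_perm _ _ hperm, Finset.toList_toFinset]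
  have hllen : l.length = s := by rw [hperm.length_eq, Finset.length_toList]
  have hsorted : l.Pairwise (fun a b => G.degree a ≤ G.degree b) := by
    have h := List.pairwise_mergeSort (le := le)
      (fun a b cc hab hbc => by
        simp only [hledef, decide_eq_true_eq] at *; omega)
      (fun a b => by simp only [hledef, ← Bool.decide_or, decide_eq_true_eq]; omega)
      S.toList
    exact h.imp (by intro a b hab; simpa [hledef] using hab)
  -- the split point m
  have hs1 : 1 ≤ s := hS.card_pos
  set P : ℕ → Prop := fun k => ∀ w ∈ l.take k, (G.degree w - 1) * k ≤ (q - 1) + (s - k)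
    with hPdef
  have hPdec : DecidablePred P := fun k => by unfold P; infer_instance
  have hmemS : ∀ {w : V}, w ∈ l → w ∈ S := fun hw => by
    rw [← hlS]; exact List.mem_toFinset.mpr hw
  have hP1 : P 1 := by
    intro w hw
    have hwS : w ∈ S := hmemS (List.take_subset _ _ hw)
    have h := hdle w hwS
    have : (G.degree w - 1) * 1 = G.degree w - 1 := Nat.mul_one _
    omega
  set m := @Nat.findGreatest P hPdec s with hmdef
  have hm1 : 1 ≤ m := @Nat.le_findGreatest 1 P hPdec s hs1 hP1
  have hms : m ≤ s := @Nat.findGreatest_le P hPdec s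
  have hPm : P m := @Nat.findGreatest_spec 1 P hPdec s hs1 hP1
  -- the two halves of S
  set S₁ : Finset V := (l.take m).toFinset with hS₁def
  set S₂ : Finset V := (l.drop m).toFinset with hS₂def
  have htaked : (l.take m).Nodup := (List.take_sublist m l).nodup hnodupl
  have hdropd : (l.drop m).Nodup := (List.drop_sublist m l).nodup hnodupl
  have hS₁card : S₁.card = m := by
    rw [hS₁def, List.toFinset_card_of_nodup htaked, List.length_take, hllen]
    omega
  have hS₂card : S₂.card = s - m := by
    rw [hS₂def, List.toFinset_card_of_nodup hdropd, List.length_drop, hllen]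
  have hS₁S : S₁ ⊆ S := fun x hx => hmemS (List.take_subset _ _ (List.mem_toFinset.mp hx))
  have hS₂S : S₂ ⊆ S := fun x hx => hmemS (List.drop_subset _ _ (List.mem_toFinset.mp hx))
  have hS₁₂ : S₁ ∪ S₂ = S := by
    rw [hS₁def, hS₂def, ← List.toFinset_append, List.take_append_drop, hlS]
  have hS₁₂d : Disjoint S₁ S₂ :=
    List.disjoint_toFinset_iff_disjoint.mpr (List.disjoint_take_drop hnodupl le_rfl)
  -- the communities
  have hcS₁ : c ∉ S₁ := fun h => Finset.disjoint_left.mp hQS hcQ (hS₁S h)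
  have hcS₂ : c ∉ S₂ := fun h => Finset.disjoint_left.mp hQS hcQ (hS₂S h)
  set C₁ : Finset V := insert c S₁ with hC₁def
  set C₂ : Finset V := (Q.erase c) ∪ S₂ with hC₂def
  have hC₁card : C₁.card = m + 1 := by
    rw [hC₁def, Finset.card_insert_of_notMem hcS₁, hS₁card]
  have hQS₂d : Disjoint (Q.erase c) S₂ :=
    Finset.disjoint_of_subset_left (Finset.erase_subset _ _)
      (Finset.disjoint_of_subset_right hS₂S hQS)
  have hC₂card : C₂.card = (q - 1) + (s - m) := by
    rw [hC₂def, Finset.card_union_of_disjoint hQS₂d, Finset.card_erase_of_mem hcQ, hS₂card]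
  -- size of C₂
  have hblarge : 3 ≤ q ∨ m < s := by
    by_cases h3 : 3 ≤ q
    · exact Or.inl h3
    rcases hcase with h | ⟨hs2, w, hwS, hw2⟩
    · exact Or.inl h
    right
    by_contra hcon
    have hmeq : m = s := by omega
    have hwl : w ∈ l.take m := by
      rw [hmeq, List.take_of_length_le (le_of_eq hllen)]
      rw [← hlS] at hwS; exact List.mem_toFinset.mp hwS
    have := hPm w hwl
    have h2 : 1 * 2 ≤ (G.degree w - 1) * s := Nat.mul_le_mul (by omega) hs2
    rw [hmeq] at this
    omega
  have hC₂2 : 2 ≤ C₂.card := by rw [hC₂card]; rcases hblarge with h | h <;> omega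
  -- sortedness facts
  have hsort1 : ∀ w ∈ S₁, ∀ w' ∈ S₂, G.degree w ≤ G.degree w' := by
    intro w hw w' hw'
    exact hsorted.rel_of_mem_take_of_mem_drop
      (List.mem_toFinset.mp hw) (List.mem_toFinset.mp hw')
  have hsort2 : ∀ w'' ∈ l.take (m+1), ∀ w' ∈ l.drop m, G.degree w'' ≤ G.degree w' := by
    intro w'' hw'' w' hw'
    rw [List.take_add] at hw''
    rcases List.mem_append.mp hw'' with h | h
    · exact hsorted.rel_of_mem_take_of_mem_drop h hw'
    · have hds : (l.drop m).Pairwise (fun a b => G.degree a ≤ G.degree b) :=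
        hsorted.sublist (List.drop_sublist m l)
      rcases List.mem_append.mp ((List.take_append_drop 1 (l.drop m)) ▸ hw') with h' | h'
      · exact le_of_eq (by rw [mem_take_one h h'])
      · exact hds.rel_of_mem_take_of_mem_drop h h'
  -- the key inequality for S₂
  have hfS₂ : ∀ w' ∈ S₂, (q - 1) + (s - m) ≤ (G.degree w' - 1) * (m + 1) := by
    intro w' hw'
    have hlt : m < s := by
      have := Finset.card_pos.mpr ⟨w', hw'⟩
      rw [hS₂card] at this; omega
    have hnP : ¬ P (m + 1) :=
      @Nat.findGreatest_is_greatest (m+1) P hPdec s (by omega) (by omega)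
    have hnP2 : ∃ w ∈ l.take (m+1), (q-1) + (s-(m+1)) < (G.degree w - 1)*(m+1) := by
      by_contra hc
      push_neg at hc
      exact hnP (fun w hw => hc w hw)
    obtain ⟨w'', hw''t, hgt⟩ := hnP2
    have hle'' : G.degree w'' ≤ G.degree w' := hsort2 w'' hw''t w' (List.mem_toFinset.mp hw')
    have h1 : (G.degree w'' - 1) * (m+1) ≤ (G.degree w' - 1) * (m+1) :=
      Nat.mul_le_mul (by omega) le_rfl
    omega
  -- adjacency within Q
  have hQadj : ∀ x ∈ Q, ∀ y ∈ Q, x ≠ y → G.Adj x y := fun x hx y hy hne => hclique hx hy hne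
  -- nbrsIn computations
  have hnbr1 : ∀ w ∈ S, nbrsIn G C₁ w = {c} := by
    intro w hw
    show (insert c S₁).filter (fun x => G.Adj w x) = {c}
    rw [Finset.filter_insert, if_pos (hcadj w hw).symm]
    rw [Finset.filter_eq_empty_iff.mpr (fun x hx => hindep w hw x (hS₁S hx))]
    rfl
  have hnbr2 : ∀ w ∈ S, nbrsIn G C₂ w = (G.neighborFinset w).erase c := by
    intro w hw
    show ((Q.erase c) ∪ S₂).filter (fun x => G.Adj w x) = (G.neighborFinset w).erase c
    rw [Finset.filter_union,
      Finset.filter_eq_empty_iff.mpr (fun x hx => hindep w hw x (hS₂S hx)),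
      Finset.union_empty]
    ext x
    simp only [Finset.mem_filter, Finset.mem_erase, SimpleGraph.mem_neighborFinset]
    constructor
    · rintro ⟨⟨hxc, _⟩, hadj⟩
      exact ⟨hxc, hadj⟩
    · rintro ⟨hxc, hadj⟩
      exact ⟨⟨hxc, hNQ w hw ((SimpleGraph.mem_neighborFinset G w x).mpr hadj)⟩, hadj⟩
  have hnbr2card : ∀ w ∈ S, (nbrsIn G C₂ w).card = G.degree w - 1 := by
    intro w hw
    rw [hnbr2 w hw, Finset.card_erase_of_mem (hcmem w hw),
      SimpleGraph.card_neighborFinset_eq_degree]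
  have hnbrc : nbrsIn G C₁ c = S₁ := by
    show (insert c S₁).filter (fun x => G.Adj c x) = S₁
    rw [Finset.filter_insert, if_neg (G.irrefl)]
    exact Finset.filter_eq_self.mpr (fun x hx => hcadj x (hS₁S hx))
  -- assembling
  refine ⟨C₁, C₂, ⟨by omega, hC₂2, ?_, ?_, ?_, ?_⟩⟩
  · -- disjoint
    rw [Finset.disjoint_left]
    intro x hx
    rcases Finset.mem_insert.mp hx with rfl | hx
    · intro hc
      rcases Finset.mem_union.mp hc with h | h
      · exact Finset.notMem_erase _ _ h
      · exact hcS₂ h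
    · intro hc
      rcases Finset.mem_union.mp hc with h | h
      · exact Finset.disjoint_left.mp hQS (Finset.mem_of_mem_erase h) (hS₁S hx)
      · exact Finset.disjoint_left.mp hS₁₂d hx h
  · -- union
    apply Finset.eq_univ_iff_forall.mpr
    intro x
    rcases Finset.mem_union.mp (hunion ▸ Finset.mem_univ x) with hx | hx
    · by_cases hxc : x = c
      · exact Finset.mem_union_left _ (by rw [hxc]; exact Finset.mem_insert_self _ _)
      · exact Finset.mem_union_right _ (Finset.mem_union_left _ (Finset.mem_erase.mpr ⟨hxc, hx⟩))
    · rcases Finset.mem_union.mp (hS₁₂.symm ▸ hx : x ∈ S₁ ∪ S₂) with h | h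
      · exact Finset.mem_union_left _ (Finset.mem_insert_of_mem h)
      · exact Finset.mem_union_right _ (Finset.mem_union_right _ h)
  · -- condition on C₁
    intro v hv
    rcases Finset.mem_insert.mp hv with rfl | hvS₁
    · rw [hnbrc, hC₁card, hS₁card]
      have hle : (nbrsIn G C₂ v).card ≤ C₂.card := Finset.card_filter_le _ _
      calc (nbrsIn G C₂ v).card * (m + 1 - 1) ≤ C₂.card * m := by
            have := Nat.mul_le_mul hle (le_refl m); simpa using this
        _ = m * C₂.card := Nat.mul_comm _ _
    · have hvS : v ∈ S := hS₁S hvS₁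
      have hP := hPm v (List.mem_toFinset.mp hvS₁)
      rw [hnbr1 v hvS, hnbr2card v hvS, hC₁card, hC₂card, Finset.card_singleton,
        Nat.add_sub_cancel, one_mul]
      exact hP
  · -- condition on C₂
    intro v hv
    rcases Finset.mem_union.mp hv with hu | hvS₂
    · -- v ∈ Q.erase c
      have hvQ : v ∈ Q := Finset.mem_of_mem_erase hu
      have hvc : v ≠ c := Finset.ne_of_mem_erase hu
      -- nbrsIn C₁ v
      have hn1 : nbrsIn G C₁ v = insert c (S₁.filter (fun x => G.Adj v x)) := by
        show (insert c S₁).filter (fun x => G.Adj v x) = _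
        rw [Finset.filter_insert, if_pos (hQadj v hvQ c hcQ hvc)]
      have hcfil : c ∉ S₁.filter (fun x => G.Adj v x) :=
        fun h => hcS₁ (Finset.mem_of_mem_filter c h)
      have hn1card : (nbrsIn G C₁ v).card = (S₁.filter (fun x => G.Adj v x)).card + 1 := by
        rw [hn1, Finset.card_insert_of_notMem hcfil]
      -- nbrsIn C₂ v
      have hn2 : nbrsIn G C₂ v = ((Q.erase c).erase v) ∪ (S₂.filter (fun x => G.Adj v x)) := by
        show ((Q.erase c) ∪ S₂).filter (fun x => G.Adj v x) = _
        rw [Finset.filter_union]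
        congr 1
        ext x
        simp only [Finset.mem_filter, Finset.mem_erase]
        constructor
        · rintro ⟨⟨hxc, hxQ⟩, hadj⟩
          exact ⟨(G.ne_of_adj hadj).symm, hxc, hxQ⟩
        · rintro ⟨hxv, hxc, hxQ⟩
          exact ⟨⟨hxc, hxQ⟩, hQadj v hvQ x hxQ (Ne.symm hxv)⟩
      have hdisj2 : Disjoint ((Q.erase c).erase v) (S₂.filter (fun x => G.Adj v x)) :=
        Finset.disjoint_of_subset_left (Finset.erase_subset _ _)
          (Finset.disjoint_of_subset_right (Finset.filter_subset _ _) hQS₂d)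
      have hn2card : (nbrsIn G C₂ v).card = (q - 1 - 1) + (S₂.filter (fun x => G.Adj v x)).card := by
        rw [hn2, Finset.card_union_of_disjoint hdisj2, Finset.card_erase_of_mem hu,
          Finset.card_erase_of_mem hcQ]
      set f := (S₁.filter (fun x => G.Adj v x)).card with hfdef
      set g := (S₂.filter (fun x => G.Adj v x)).card with hgdef
      rw [hn1card, hn2card, hC₁card, hC₂card]
      by_cases hall : ∀ w ∈ S₂, G.Adj v w
      · -- adjacent to all of S₂
        have hgall : g = s - m := by
          rw [hgdef, Finset.filter_eq_self.mpr hall, hS₂card]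
        have hfm : f ≤ m := by rw [hfdef, ← hS₁card]; exact Finset.card_filter_le _ _
        have hKey : (f + 1) * ((q-1) + (s-m) - 1) ≤ (m + 1) * ((q-1) + (s-m) - 1) :=
          Nat.mul_le_mul (by omega) le_rfl
        have hEq : (q - 1 - 1) + g = (q-1) + (s-m) - 1 := by
          rw [hgall]; omega
        rw [hEq]
        calc (f + 1) * ((q-1) + (s-m) - 1) ≤ (m + 1) * ((q-1) + (s-m) - 1) := hKey
          _ = ((q-1) + (s-m) - 1) * (m + 1) := Nat.mul_comm _ _
      · -- some vertex of S₂ not adjacent to v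
        push_neg at hall
        obtain ⟨w', hw'S₂, hw'na⟩ := hall
        have hw'S : w' ∈ S := hS₂S hw'S₂
        -- f = 0
        have hf0 : f = 0 := by
          rw [hfdef, Finset.card_eq_zero]
          apply Finset.filter_eq_empty_iff.mpr
          intro w hw hadj
          have hwS : w ∈ S := hS₁S hw
          have hvN : v ∈ G.neighborFinset w := (SimpleGraph.mem_neighborFinset G w v).mpr hadj.symm
          have hsub := hmono w hwS w' hw'S (hsort1 w hw w' hw'S₂)
          exact hw'na ((SimpleGraph.mem_neighborFinset G w' v).mp (hsub hvN)).symm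
        -- degree bound for w'
        have hw'deg : G.degree w' ≤ q - 1 := by
          have hsub : G.neighborFinset w' ⊆ Q.erase v := by
            intro x hx
            refine Finset.mem_erase.mpr ⟨?_, hNQ w' hw'S hx⟩
            rintro rfl
            exact hw'na ((SimpleGraph.mem_neighborFinset G w' x).mp hx).symm
          have := Finset.card_le_card hsub
          rw [SimpleGraph.card_neighborFinset_eq_degree, Finset.card_erase_of_mem hvQ] at this
          exact this
        have h1 := hfS₂ w' hw'S₂
        have h2 : (G.degree w' - 1) * (m+1) ≤ ((q - 1 - 1) + g) * (m+1) :=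
          Nat.mul_le_mul (by omega) le_rfl
        rw [hf0]
        calc (0 + 1) * ((q-1) + (s-m) - 1) ≤ (q-1) + (s-m) := by omega
          _ ≤ ((q - 1 - 1) + g) * (m + 1) := le_trans h1 h2
    · -- v ∈ S₂
      have hvS : v ∈ S₂ := hvS₂
      have hvSS : v ∈ S := hS₂S hvS
      rw [hnbr1 v hvSS, hnbr2card v hvSS, hC₁card, hC₂card, Finset.card_singleton]
      have h1 := hfS₂ v hvS
      have h2 : (G.degree v - 1) * (m+1) ≤ (G.degree v - 1) * (m+1) := le_rfl
      calc 1 * ((q-1) + (s-m) - 1) ≤ (q-1) + (s-m) := by omega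
        _ ≤ (G.degree v - 1) * (m + 1) := h1

end helpers

/-- A connected threshold graph on `n ≥ 4` vertices admits a 2-community structure if and
only if it is not isomorphic to the star `S_{n-1} = K_{1,n-1}`. -/
theorem stmt_17 {V : Type*} [Fintype V] [DecidableEq V] (G : SimpleGraph V)
    [DecidableRel G.Adj] (hth : IsThresholdGraph G) (hconn : G.Connected)
    (hn : 4 ≤ Fintype.card V) :
    (∃ C₁ C₂ : Finset V, Is2Comm G C₁ C₂) ↔
      ¬ Nonempty
        (G ≃g completeBipartiteGraph (Fin 1) (Fin (Fintype.card V - 1))) := by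
  obtain ⟨Q, S, hQS, hunion, hclique, hindep, hnest⟩ := hth
  have hadj_ex : ∀ v : V, ∃ x, G.Adj v x := by
    intro v
    obtain ⟨u, hu⟩ := Fintype.exists_ne_of_one_lt_card (by omega) v
    obtain ⟨p⟩ := hconn.preconnected v u
    cases p with
    | nil => exact absurd rfl hu
    | cons h p => exact ⟨_, h⟩
  have hNQ : ∀ w ∈ S, G.neighborFinset w ⊆ Q := by
    intro w hw x hx
    rw [SimpleGraph.mem_neighborFinset] at hx
    rcases Finset.mem_union.mp (hunion ▸ Finset.mem_univ x) with h | h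
    · exact h
    · exact absurd hx (hindep w hw x h)
  have hcardsum : Q.card + S.card = Fintype.card V := by
    rw [← Finset.card_union_of_disjoint hQS, hunion, Finset.card_univ]
  constructor
  · rintro ⟨C₁, C₂, hcomm⟩ ⟨e⟩
    set c := e.symm (Sum.inl (0 : Fin 1)) with hcdef
    have hinr : ∀ v : V, v ≠ c → ∃ j, e v = Sum.inr j := by
      intro v hv
      cases hev : e v with
      | inl j =>
        exfalso
        apply hv
        have hj : j = 0 := Subsingleton.elim _ _
        rw [hcdef, ← hj, ← hev]; simp
      | inr j => exact ⟨j, rfl⟩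
    have hec : e c = Sum.inl 0 := by rw [hcdef]; exact Equiv.apply_symm_apply _ _
    have h1 : ∀ v, v ≠ c → G.Adj c v := by
      intro v hv
      obtain ⟨j, hj⟩ := hinr v hv
      have hadj : (completeBipartiteGraph (Fin 1) (Fin (Fintype.card V - 1))).Adj (e c) (e v) := by
        rw [hec, hj]; simp [completeBipartiteGraph]
      exact e.map_rel_iff.mp hadj
    have h2 : ∀ v w : V, v ≠ c → w ≠ c → ¬ G.Adj v w := by
      intro v w hv hw hadj
      obtain ⟨j, hj⟩ := hinr v hv
      obtain ⟨k, hk⟩ := hinr w hw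
      have h := e.map_rel_iff.mpr hadj
      rw [hj, hk] at h
      simp [completeBipartiteGraph] at h
    exact no2comm_of_star G c h1 h2 C₁ C₂ hcomm
  · intro hstar
    by_cases hS : S.Nonempty
    · have hdegS : ∀ w ∈ S, ∃ x, G.Adj w x := fun w _ => hadj_ex w
      by_cases hq : 2 ≤ Q.card
      · by_cases hbig : 3 ≤ Q.card ∨ (2 ≤ S.card ∧ ∃ w ∈ S, 2 ≤ G.degree w)
        · exact construction G Q S hQS hunion hclique hindep hnest hdegS hS hq hbig
        · exfalso
          apply hstar
          push_neg at hbig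
          obtain ⟨hq3, hrest⟩ := hbig
          have hq2 : Q.card = 2 := by omega
          have hs2 : 2 ≤ S.card := by omega
          have hsmall : ∀ w ∈ S, (G.neighborFinset w).card ≤ 1 := by
            intro w hw
            have := hrest hs2 w hw
            rw [SimpleGraph.card_neighborFinset_eq_degree]
            omega
          obtain ⟨w₁, hw₁⟩ := hS
          obtain ⟨x, hx⟩ := hadj_ex w₁
          set c := x with hcdef
          have hcN : c ∈ G.neighborFinset w₁ := (SimpleGraph.mem_neighborFinset G w₁ c).mpr hx
          have hcQ : c ∈ Q := hNQ w₁ hw₁ hcN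
          have hcall : ∀ w ∈ S, c ∈ G.neighborFinset w := by
            intro w hw
            rcases hnest w₁ hw₁ w hw with h | h
            · exact h hcN
            · obtain ⟨y, hy⟩ := hadj_ex w
              have hyN : y ∈ G.neighborFinset w := (SimpleGraph.mem_neighborFinset G w y).mpr hy
              have : y = c := Finset.card_le_one.mp (hsmall w₁ hw₁) y (h hyN) c hcN
              rwa [← this]
          have h1 : ∀ v, v ≠ c → G.Adj c v := by
            intro v hv
            rcases Finset.mem_union.mp (hunion ▸ Finset.mem_univ v) with h | h
            · exact hclique hcQ h (Ne.symm hv)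
            · exact ((SimpleGraph.mem_neighborFinset G v c).mp (hcall v h)).symm
          have h2 : ∀ v w : V, v ≠ c → w ≠ c → ¬ G.Adj v w := by
            intro v w hv hw hadj
            rcases Finset.mem_union.mp (hunion ▸ Finset.mem_univ v) with hvm | hvm
            · rcases Finset.mem_union.mp (hunion ▸ Finset.mem_univ w) with hwm | hwm
              · -- both in Q : then v = w since Q.erase c has one element
                have hv' : v ∈ Q.erase c := Finset.mem_erase.mpr ⟨hv, hvm⟩
                have hw' : w ∈ Q.erase c := Finset.mem_erase.mpr ⟨hw, hwm⟩
                have hcard1 : (Q.erase c).card ≤ 1 := by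
                  rw [Finset.card_erase_of_mem hcQ]; omega
                have : v = w := Finset.card_le_one.mp hcard1 v hv' w hw'
                rw [this] at hadj
                exact G.irrefl hadj
              · -- w ∈ S : then v = c
                have hvN : v ∈ G.neighborFinset w := (SimpleGraph.mem_neighborFinset G w v).mpr hadj.symm
                exact hv (Finset.card_le_one.mp (hsmall w hwm) v hvN c (hcall w hwm))
            · have hwN : w ∈ G.neighborFinset v := (SimpleGraph.mem_neighborFinset G v w).mpr hadj
              exact hw (Finset.card_le_one.mp (hsmall v hvm) w hwN c (hcall v hvm))
          exact star_iso G c h1 h2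
      · exfalso
        apply hstar
        obtain ⟨w₁, hw₁⟩ := hS
        obtain ⟨x, hx⟩ := hadj_ex w₁
        have hcN : x ∈ G.neighborFinset w₁ := (SimpleGraph.mem_neighborFinset G w₁ x).mpr hx
        have hcQ : x ∈ Q := hNQ w₁ hw₁ hcN
        have hQsing : Q = {x} := by
          apply Finset.eq_singleton_iff_unique_mem.mpr
          refine ⟨hcQ, fun y hy => Finset.card_le_one.mp (show Q.card ≤ 1 by omega) y hy x hcQ⟩
        have hSx : ∀ w ∈ S, x ∈ G.neighborFinset w := by
          intro w hw
          obtain ⟨y, hy⟩ := hadj_ex w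
          have hyN : y ∈ G.neighborFinset w := (SimpleGraph.mem_neighborFinset G w y).mpr hy
          have : y = x := by
            have := hNQ w hw hyN
            rw [hQsing] at this
            exact Finset.mem_singleton.mp this
          rwa [← this]
        have h1 : ∀ v, v ≠ x → G.Adj x v := by
          intro v hv
          rcases Finset.mem_union.mp (hunion ▸ Finset.mem_univ v) with h | h
          · exact absurd (by rwa [hQsing, Finset.mem_singleton] at h) hv
          · exact ((SimpleGraph.mem_neighborFinset G v x).mp (hSx v h)).symm
        have h2 : ∀ v w : V, v ≠ x → w ≠ x → ¬ G.Adj v w := by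
          intro v w hv hw hadj
          have hvS : v ∈ S := by
            rcases Finset.mem_union.mp (hunion ▸ Finset.mem_univ v) with h | h
            · exact absurd (by rwa [hQsing, Finset.mem_singleton] at h) hv
            · exact h
          have hwS : w ∈ S := by
            rcases Finset.mem_union.mp (hunion ▸ Finset.mem_univ w) with h | h
            · exact absurd (by rwa [hQsing, Finset.mem_singleton] at h) hw
            · exact h
          exact hindep v hvS w hwS hadj
        exact star_iso G x h1 h2
    · -- S = ∅ : G is a clique on ≥ 4 vertices
      have hSe : S = ∅ := Finset.not_nonempty_iff_eq_empty.mp hS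
      have hQu : Q = Finset.univ := by rw [← hunion, hSe, Finset.union_empty]
      have hadj : ∀ x y : V, x ≠ y → G.Adj x y := by
        intro x y hxy
        exact hclique (by rw [hQu]; exact Finset.mem_univ x) (by rw [hQu]; exact Finset.mem_univ y) hxy
      obtain ⟨x, y, hxy⟩ := Fintype.exists_pair_of_one_lt_card (show 1 < Fintype.card V by omega)
      have hc1 : ({x, y} : Finset V).card = 2 := Finset.card_pair hxy
      have hc2 : (Finset.univ \ {x, y} : Finset V).card = Fintype.card V - 2 := by
        rw [Finset.card_sdiff_of_subset (Finset.subset_univ _), Finset.card_univ, hc1]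
      refine ⟨{x, y}, Finset.univ \ {x, y}, ?_, ?_, Finset.disjoint_sdiff, ?_, ?_, ?_⟩
      · omega
      · omega
      · exact Finset.union_sdiff_of_subset (Finset.subset_univ _)
      · intro v hv
        have h1le : 1 ≤ (nbrsIn G {x, y} v).card := by
          rcases Finset.mem_insert.mp hv with rfl | hv'
          · refine Finset.card_pos.mpr ⟨y, Finset.mem_filter.mpr ⟨Finset.mem_insert_of_mem (Finset.mem_singleton_self y), hadj v y hxy⟩⟩
          · have hvy : v = y := Finset.mem_singleton.mp hv'
            subst hvy
            refine Finset.card_pos.mpr ⟨x, Finset.mem_filter.mpr ⟨Finset.mem_insert_self x _, hadj v x (Ne.symm hxy)⟩⟩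
        have hfle : (nbrsIn G (Finset.univ \ {x, y}) v).card ≤ (Finset.univ \ {x, y} : Finset V).card :=
          Finset.card_filter_le _ _
        calc (nbrsIn G (Finset.univ \ {x, y}) v).card * (({x, y} : Finset V).card - 1)
            = (nbrsIn G (Finset.univ \ {x, y}) v).card * 1 := by rw [hc1]
          _ ≤ 1 * (Finset.univ \ {x, y} : Finset V).card := by
              rw [Nat.mul_one, Nat.one_mul]; exact hfle
          _ ≤ (nbrsIn G {x, y} v).card * (Finset.univ \ {x, y} : Finset V).card :=
              Nat.mul_le_mul h1le le_rfl
      · intro v hv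
        have hrw : nbrsIn G (Finset.univ \ {x, y}) v = (Finset.univ \ {x, y}).erase v := by
          ext z
          simp only [nbrsIn, Finset.mem_filter, Finset.mem_erase]
          constructor
          · rintro ⟨hz, hadjz⟩
            exact ⟨(G.ne_of_adj hadjz).symm, hz⟩
          · rintro ⟨hzv, hz⟩
            exact ⟨hz, hadj v z (Ne.symm hzv)⟩
        have hrwc : (nbrsIn G (Finset.univ \ {x, y}) v).card = (Finset.univ \ {x, y} : Finset V).card - 1 := by
          rw [hrw, Finset.card_erase_of_mem hv]
        have hfle : (nbrsIn G {x, y} v).card ≤ 2 := by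
          have := Finset.card_filter_le ({x, y} : Finset V) (fun w => G.Adj v w)
          rw [hc1] at this
          exact this
        rw [hrwc, hc1]
        calc (nbrsIn G {x, y} v).card * ((Finset.univ \ {x, y} : Finset V).card - 1)
            ≤ 2 * ((Finset.univ \ {x, y} : Finset V).card - 1) := Nat.mul_le_mul hfle le_rfl
          _ = ((Finset.univ \ {x, y} : Finset V).card - 1) * 2 := Nat.mul_comm _ _
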